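/- Let q ≥ 2 and n ≥ 1 be integers and let f : (ZMod q)ⁿ → ℝ. Define the Fourier transform f̂(ω) = Σ_{x ∈ (ZMod q)ⁿ} f(x) e^{2πi⟨ω,x⟩/q}, where ⟨ω,x⟩ = Σ_k ω_k x_k ∈ ZMod q. Assume that f̂(ω) is a nonnegative real number for every ω, that f̂(0) > 0, and let C ⊆ (ZMod q)ⁿ be a finite nonempty set such that f(x − y) ≤ 0 for every pair of distinct x, y ∈ C. Then |C| ≤ qⁿ · f(0) / f̂(0). -/

import Mathlib

open Complex Finset

/-- Fourier transform on `(ZMod q)ⁿ`: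
`f̂(ω) = Σ_x f(x) e^{2πi⟨ω,x⟩/q}`, with `⟨ω,x⟩ = Σₖ ωₖ xₖ ∈ ZMod q`. -/
noncomputable def fourierZq (q n : ℕ) [NeZero q] (f : (Fin n → ZMod q) → ℝ)
    (ω : Fin n → ZMod q) : ℂ :=
  ∑ x : Fin n → ZMod q, (f x : ℂ) *
    Complex.exp (2 * Real.pi * Complex.I * ((∑ k, ω k * x k : ZMod q).val : ℂ) / q)

noncomputable def Ee (q : ℕ) [NeZero q] (t : ZMod q) : ℂ :=
  Complex.exp (2 * Real.pi * Complex.I * (t.val : ℂ) / q)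

lemma Ee_eq_pow (q : ℕ) [NeZero q] (t : ZMod q) :
    Ee q t = Complex.exp (2 * Real.pi * Complex.I / q) ^ t.val := by
  rw [← Complex.exp_nat_mul, Ee]
  exact congrArg Complex.exp (by push_cast; ring)

lemma zeta_pow_q (q : ℕ) [NeZero q] :
    Complex.exp (2 * Real.pi * Complex.I / q) ^ q = 1 := by
  rw [← Complex.exp_nat_mul]
  have hq : (q : ℂ) ≠ 0 := Nat.cast_ne_zero.mpr (NeZero.ne q)
  have : (q : ℂ) * (2 * Real.pi * Complex.I / q) = 2 * Real.pi * Complex.I := by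
    field_simp
  rw [this, Complex.exp_two_pi_mul_I]

lemma zeta_pow_mod (q : ℕ) [NeZero q] (m : ℕ) :
    Complex.exp (2 * Real.pi * Complex.I / q) ^ (m % q)
      = Complex.exp (2 * Real.pi * Complex.I / q) ^ m := by
  conv_rhs => rw [← Nat.div_add_mod m q]
  rw [pow_add, pow_mul, zeta_pow_q, one_pow, one_mul]

lemma Ee_add (q : ℕ) [NeZero q] (a b : ZMod q) : Ee q (a + b) = Ee q a * Ee q b := by
  rw [Ee_eq_pow, Ee_eq_pow, Ee_eq_pow, ← pow_add, ZMod.val_add, zeta_pow_mod]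

lemma Ee_zero (q : ℕ) [NeZero q] : Ee q 0 = 1 := by
  simp [Ee]

lemma Ee_sum (q : ℕ) [NeZero q] {ι : Type*} (s : Finset ι) (g : ι → ZMod q) :
    Ee q (∑ i ∈ s, g i) = ∏ i ∈ s, Ee q (g i) := by
  classical
  induction s using Finset.induction with
  | empty => simp [Ee_zero]
  | insert _ _ h ih => rw [Finset.sum_insert h, Finset.prod_insert h, Ee_add, ih]

lemma Ee_neg (q : ℕ) [NeZero q] (t : ZMod q) : Ee q (-t) = (starRingEnd ℂ) (Ee q t) := by
  have h1 : Ee q t * Ee q (-t) = 1 := by rw [← Ee_add, add_neg_cancel, Ee_zero]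
  have habs : ‖Ee q t‖ = 1 := by
    have : Ee q t = Complex.exp ((2 * Real.pi * t.val / q : ℝ) * Complex.I) := by
      rw [Ee]; exact congrArg Complex.exp (by push_cast; ring)
    rw [this, Complex.norm_exp_ofReal_mul_I]
  have h2 : Ee q t * (starRingEnd ℂ) (Ee q t) = 1 := by
    rw [Complex.mul_conj, Complex.normSq_eq_norm_sq, habs]; norm_num
  have h3 : Ee q t ≠ 0 := by
    intro h; rw [h, zero_mul] at h1; exact one_ne_zero h1.symm
  exact mul_left_cancel₀ h3 (h1.trans h2.symm)

lemma Ee_sum_mul (q : ℕ) [NeZero q] (a : ZMod q) :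
    ∑ t : ZMod q, Ee q (t * a) = if a = 0 then (q : ℂ) else 0 := by
  have hval : ∀ t : ZMod q, Ee q (t * a)
      = (Complex.exp (2 * Real.pi * Complex.I / q) ^ a.val) ^ t.val := by
    intro t
    rw [Ee_eq_pow, ZMod.val_mul, zeta_pow_mod, pow_mul']
  set x := Complex.exp (2 * Real.pi * Complex.I / q) ^ a.val with hx
  have hsum : ∑ t : ZMod q, Ee q (t * a) = ∑ j ∈ Finset.range q, x ^ j := by
    rw [Finset.sum_congr rfl fun t _ => hval t]
    apply Finset.sum_nbij' (fun t => (ZMod.val t)) (fun j => (j : ZMod q))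
    · intro t _; exact Finset.mem_range.mpr (ZMod.val_lt t)
    · intro j _; exact Finset.mem_univ _
    · intro t _; exact ZMod.natCast_rightInverse t
    · intro j hj; exact ZMod.val_cast_of_lt (Finset.mem_range.mp hj)
    · intro t _; rfl
  rw [hsum]
  by_cases ha : a = 0
  · simp [ha, hx]
  · rw [if_neg ha]
    have hxq : x ^ q = 1 := by
      rw [hx, ← pow_mul, mul_comm a.val q, pow_mul, zeta_pow_q, one_pow]
    have hx1 : x ≠ 1 := by
      have hprim : IsPrimitiveRoot (Complex.exp (2 * Real.pi * Complex.I / q)) q :=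
        Complex.isPrimitiveRoot_exp q (NeZero.ne q)
      intro h
      have hdvd := (hprim.pow_eq_one_iff_dvd a.val).mp h
      have hlt := ZMod.val_lt a
      have hv : a.val = 0 := Nat.eq_zero_of_dvd_of_lt hdvd hlt
      exact ha ((ZMod.val_eq_zero a).mp hv)
    have := geom_sum_eq hx1 q
    rw [this, hxq, sub_self, zero_div]

lemma Ee_ip_sum (q n : ℕ) [NeZero q] (z : Fin n → ZMod q) :
    ∑ ω : Fin n → ZMod q, Ee q (∑ k, ω k * z k)
      = if z = 0 then ((q : ℂ) ^ n) else 0 := by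
  have : ∀ ω : Fin n → ZMod q, Ee q (∑ k, ω k * z k) = ∏ k, Ee q (ω k * z k) :=
    fun ω => Ee_sum q _ _
  rw [Finset.sum_congr rfl fun ω _ => this ω]
  have hps : (∏ k : Fin n, ∑ t : ZMod q, Ee q (t * z k))
      = ∑ ω : Fin n → ZMod q, ∏ k, Ee q (ω k * z k) := Fintype.prod_sum _
  rw [← hps]
  have : ∀ k : Fin n, (∑ t : ZMod q, Ee q (t * z k)) = if z k = 0 then (q : ℂ) else 0 :=
    fun k => Ee_sum_mul q (z k)
  rw [Finset.prod_congr rfl fun k _ => this k]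
  by_cases hz : z = 0
  · simp [hz]
  · rw [if_neg hz]
    obtain ⟨k, hk⟩ : ∃ k, z k ≠ 0 := by
      by_contra h; push_neg at h; exact hz (funext h)
    exact Finset.prod_eq_zero (Finset.mem_univ k) (by rw [if_neg hk])

lemma ip_add (q n : ℕ) [NeZero q] (ω a b : Fin n → ZMod q) :
    (∑ k, ω k * (a + b) k : ZMod q) = (∑ k, ω k * a k) + ∑ k, ω k * b k := by
  rw [← Finset.sum_add_distrib]
  exact Finset.sum_congr rfl fun k _ => by simp [mul_add]

lemma ip_sub (q n : ℕ) [NeZero q] (ω a b : Fin n → ZMod q) :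
    (∑ k, ω k * (a - b) k : ZMod q) = (∑ k, ω k * a k) - ∑ k, ω k * b k := by
  rw [← Finset.sum_sub_distrib]
  exact Finset.sum_congr rfl fun k _ => by simp [mul_sub]

lemma fourier_def (q n : ℕ) [NeZero q] (f : (Fin n → ZMod q) → ℝ) (ω : Fin n → ZMod q) :
    fourierZq q n f ω = ∑ x : Fin n → ZMod q, (f x : ℂ) * Ee q (∑ k, ω k * x k) := rfl

lemma inversion (q n : ℕ) [NeZero q] (f : (Fin n → ZMod q) → ℝ) (w : Fin n → ZMod q) :
    ∑ ω : Fin n → ZMod q, fourierZq q n f ω * Ee q (∑ k, ω k * w k)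
      = (q : ℂ) ^ n * f (-w) := by
  calc ∑ ω : Fin n → ZMod q, fourierZq q n f ω * Ee q (∑ k, ω k * w k)
      = ∑ ω : Fin n → ZMod q, ∑ z : Fin n → ZMod q,
          (f z : ℂ) * Ee q (∑ k, ω k * (z + w) k) := by
        refine Finset.sum_congr rfl fun ω _ => ?_
        rw [fourier_def, Finset.sum_mul]
        refine Finset.sum_congr rfl fun z _ => ?_
        rw [mul_assoc, ← Ee_add, ip_add]
    _ = ∑ z : Fin n → ZMod q, (f z : ℂ) * ∑ ω : Fin n → ZMod q,
          Ee q (∑ k, ω k * (z + w) k) := by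
        rw [Finset.sum_comm]
        exact Finset.sum_congr rfl fun z _ => (Finset.mul_sum _ _ _).symm
    _ = ∑ z : Fin n → ZMod q, (f z : ℂ) * (if z + w = 0 then ((q:ℂ)^n) else 0) := by
        exact Finset.sum_congr rfl fun z _ => by rw [Ee_ip_sum]
    _ = (q : ℂ) ^ n * f (-w) := by
        rw [Finset.sum_eq_single (-w)]
        · rw [if_pos (by abel), mul_comm]
        · intro z _ hz
          rw [if_neg, mul_zero]
          intro h; exact hz (by linear_combination (norm := abel) h)
        · intro h; exact absurd (Finset.mem_univ _) h

theorem stmt11 (q n : ℕ) [NeZero q] (hq : 2 ≤ q) (hn : 1 ≤ n)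
    (f : (Fin n → ZMod q) → ℝ)
    (hreal : ∀ ω, (fourierZq q n f ω).im = 0)
    (hnonneg : ∀ ω, 0 ≤ (fourierZq q n f ω).re)
    (h0 : 0 < (fourierZq q n f 0).re)
    (C : Finset (Fin n → ZMod q)) (hC : C.Nonempty)
    (hCf : ∀ x ∈ C, ∀ y ∈ C, x ≠ y → f (x - y) ≤ 0) :
    (C.card : ℝ) ≤ (q : ℝ) ^ n * f 0 / (fourierZq q n f 0).re := by
  classical
  set g : (Fin n → ZMod q) → ℂ := fun ω => ∑ y ∈ C, Ee q (∑ k, ω k * y k) with hg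
  set S : ℝ := ∑ x ∈ C, ∑ y ∈ C, f (x - y) with hS
  -- main Fourier identity
  have hconj : ∀ ω, (starRingEnd ℂ) (g ω) * g ω
      = ∑ x ∈ C, ∑ y ∈ C, Ee q (∑ k, ω k * (y - x) k) := by
    intro ω
    rw [hg, map_sum, Finset.sum_mul_sum]
    refine Finset.sum_congr rfl fun x _ => Finset.sum_congr rfl fun y _ => ?_
    rw [← Ee_neg, ← Ee_add, ip_sub]
    congr 1; abel
  have hT : ∑ ω : Fin n → ZMod q, fourierZq q n f ω * ((starRingEnd ℂ) (g ω) * g ω)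
      = (q : ℂ) ^ n * S := by
    calc ∑ ω : Fin n → ZMod q, fourierZq q n f ω * ((starRingEnd ℂ) (g ω) * g ω)
        = ∑ ω : Fin n → ZMod q, ∑ x ∈ C, ∑ y ∈ C,
            fourierZq q n f ω * Ee q (∑ k, ω k * (y - x) k) := by
          refine Finset.sum_congr rfl fun ω _ => ?_
          rw [hconj, Finset.mul_sum]
          exact Finset.sum_congr rfl fun x _ => Finset.mul_sum _ _ _
      _ = ∑ x ∈ C, ∑ y ∈ C, ∑ ω : Fin n → ZMod q,
            fourierZq q n f ω * Ee q (∑ k, ω k * (y - x) k) := by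
          rw [Finset.sum_comm]
          exact Finset.sum_congr rfl fun x _ => Finset.sum_comm
      _ = ∑ x ∈ C, ∑ y ∈ C, ((q : ℂ) ^ n * (f (x - y) : ℂ)) := by
          refine Finset.sum_congr rfl fun x _ => Finset.sum_congr rfl fun y _ => ?_
          rw [inversion, neg_sub]
      _ = (q : ℂ) ^ n * S := by
          simp only [hS, Complex.ofReal_sum, Finset.mul_sum]
  -- real parts
  have hTre : (q : ℝ) ^ n * S
      = ∑ ω : Fin n → ZMod q, (fourierZq q n f ω).re * Complex.normSq (g ω) := by
    have := congrArg Complex.re hT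
    rw [show ((q : ℂ) ^ n * (S:ℂ)).re = (q:ℝ)^n * S by
      norm_cast] at this
    rw [← this, Complex.re_sum]
    refine Finset.sum_congr rfl fun ω _ => ?_
    rw [mul_comm ((starRingEnd ℂ) (g ω)) (g ω), Complex.mul_conj]
    rw [show fourierZq q n f ω * ((Complex.normSq (g ω) : ℝ) : ℂ)
        = ((Complex.normSq (g ω) : ℝ) : ℂ) * fourierZq q n f ω from mul_comm _ _]
    rw [Complex.re_ofReal_mul, mul_comm]
  have hg0 : g 0 = (C.card : ℂ) := by
    rw [hg]
    simp [Ee_zero]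
  have hlow : (fourierZq q n f 0).re * (C.card : ℝ) ^ 2
      ≤ ∑ ω : Fin n → ZMod q, (fourierZq q n f ω).re * Complex.normSq (g ω) := by
    have h00 : (fourierZq q n f 0).re * Complex.normSq (g 0)
        = (fourierZq q n f 0).re * (C.card : ℝ) ^ 2 := by
      rw [hg0, Complex.normSq_natCast]
      push_cast
      ring
    rw [← h00]
    exact Finset.single_le_sum
      (fun ω _ => mul_nonneg (hnonneg ω) (Complex.normSq_nonneg _))
      (Finset.mem_univ _)
  have hupp : S ≤ (C.card : ℝ) * f 0 := by
    rw [hS]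
    have : ∀ x ∈ C, (∑ y ∈ C, f (x - y)) ≤ f 0 := by
      intro x hx
      rw [← Finset.add_sum_erase C _ hx, sub_self]
      have : (∑ y ∈ C.erase x, f (x - y)) ≤ 0 := by
        refine Finset.sum_nonpos fun y hy => ?_
        obtain ⟨hyx, hyC⟩ := Finset.mem_erase.mp hy
        exact hCf x hx y hyC (Ne.symm hyx)
      linarith
    calc (∑ x ∈ C, ∑ y ∈ C, f (x - y)) ≤ ∑ _x ∈ C, f 0 := Finset.sum_le_sum this
      _ = (C.card : ℝ) * f 0 := by rw [Finset.sum_const, nsmul_eq_mul]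
  have hcard : (0:ℝ) < (C.card : ℝ) := by
    exact_mod_cast Finset.card_pos.mpr hC
  have hqn : (0:ℝ) ≤ (q:ℝ)^n := by positivity
  have hmain : (C.card : ℝ) * (fourierZq q n f 0).re ≤ (q:ℝ)^n * f 0 := by
    have h1 : (fourierZq q n f 0).re * (C.card : ℝ) ^ 2
        ≤ (q:ℝ)^n * ((C.card : ℝ) * f 0) := by
      calc (fourierZq q n f 0).re * (C.card : ℝ) ^ 2
          ≤ (q : ℝ) ^ n * S := by rw [hTre]; exact hlow
        _ ≤ (q:ℝ)^n * ((C.card : ℝ) * f 0) := mul_le_mul_of_nonneg_left hupp hqn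
    have h2 : ((C.card : ℝ) * (fourierZq q n f 0).re) * (C.card : ℝ)
        ≤ ((q:ℝ)^n * f 0) * (C.card : ℝ) := by nlinarith
    exact le_of_mul_le_mul_right h2 hcard
  rw [le_div_iff₀ h0]
  exact hmain
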